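/- The conic (x − y² = 0) (in affine coordinates with z = 1) meets the nodal cubic N = (xyz = x³ + y³) only at the node, with contact orders (5,1) with the two branches. -/

import Mathlib

/-!
STATEMENT 14: The conic (x − y² = 0) (in affine coordinates with z = 1, projectively
xz = y²) meets the nodal cubic N = (xyz = x³ + y³) only at the node, with contact orders
(5,1) with the two branches.

The two branches of N at the node (in the chart z = 1) are t ↦ (u(t), t) and
t ↦ (t, u(t)), where u is a power series of order 2 with u·t = u³ + t³.  The contact order
of the conic x = y² with a branch is the order of vanishing of x − y² along the branch:
ord (u − t²) = 5 on the first branch and ord (t − u²) = 1 on the second.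
-/

section Aux14


open PowerSeries

variable {k : Type} [Field k]

lemma mem_pow_span_X_iff (n : ℕ) (f : k⟦X⟧) :
    f ∈ ((Ideal.span {(X : k⟦X⟧)}) ^ n • ⊤ : Submodule k⟦X⟧ k⟦X⟧) ↔
      ∀ m, m < n → coeff m f = 0 := by
  rw [smul_eq_mul, Ideal.mul_top, Ideal.span_singleton_pow, Ideal.mem_span_singleton]
  exact X_pow_dvd_iff

lemma hausdorff_X : IsHausdorff (Ideal.span {(X : k⟦X⟧)}) k⟦X⟧ := by
    constructor
    intro x hx
    ext n
    have := (SModEq.sub_mem.mp (hx (n+1)))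
    rw [sub_zero, mem_pow_span_X_iff] at this
    simpa using this n (Nat.lt_succ_self n)
lemma precomplete_X : IsPrecomplete (Ideal.span {(X : k⟦X⟧)}) k⟦X⟧ := by
    constructor
    intro f hf
    refine ⟨PowerSeries.mk fun i => coeff i (f (i+1)), fun n => ?_⟩
    rw [SModEq.sub_mem, mem_pow_span_X_iff]
    intro m hm
    have h := SModEq.sub_mem.mp (hf (show m+1 ≤ n from hm))
    rw [mem_pow_span_X_iff] at h
    have := h m (Nat.lt_succ_self m)
    simp only [map_sub, sub_eq_zero] at this ⊢
    simpa using this.symm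

lemma adic_complete_X : IsAdicComplete (Ideal.span {(X : k⟦X⟧)}) k⟦X⟧ :=
  { hausdorff_X, precomplete_X with }

lemma exists_root_b : ∃ b : k⟦X⟧, b ^ 3 - b ^ 2 + X ^ 3 = 0 ∧ constantCoeff b = 1 := by
  haveI : IsAdicComplete (Ideal.span {(X : k⟦X⟧)}) k⟦X⟧ := adic_complete_X
  haveI : HenselianRing k⟦X⟧ (Ideal.span {(X : k⟦X⟧)}) := inferInstance
  set I := Ideal.span {(X : k⟦X⟧)}
  set F : Polynomial k⟦X⟧ := Polynomial.X ^ 3 - Polynomial.X ^ 2 + Polynomial.C (X ^ 3) with hF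
  have hmonic : F.Monic := by
    have : F = Polynomial.X ^ 3 + (-Polynomial.X ^ 2 + Polynomial.C (X ^ 3)) := by ring
    rw [this]
    apply Polynomial.monic_X_pow_add
    apply lt_of_le_of_lt (Polynomial.degree_add_le _ _)
    simp only [Polynomial.degree_neg]
    refine max_lt ?_ ?_
    · exact lt_of_le_of_lt (Polynomial.degree_pow_le _ _) (by norm_num)
    · exact lt_of_le_of_lt (Polynomial.degree_C_le) (by norm_num)
  have heval : F.eval 1 ∈ I := by
    simp only [hF, Polynomial.eval_add, Polynomial.eval_sub, Polynomial.eval_pow,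
      Polynomial.eval_X, Polynomial.eval_C, one_pow]
    rw [show (1 : k⟦X⟧) - 1 + X ^ 3 = X^2 * X by ring]
    exact Ideal.mul_mem_left _ _ (Ideal.subset_span rfl)
  have hderiv : IsUnit (Ideal.Quotient.mk I (F.derivative.eval 1)) := by
    have : F.derivative.eval 1 = 1 := by
      simp [hF, Polynomial.derivative_pow]
      ring
    rw [this, map_one]
    exact isUnit_one
  obtain ⟨a, ha, ha1⟩ := HenselianRing.is_henselian F hmonic 1 heval hderiv
  refine ⟨a, ?_, ?_⟩
  · have := ha
    simp only [Polynomial.IsRoot, hF, Polynomial.eval_add, Polynomial.eval_sub,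
      Polynomial.eval_pow, Polynomial.eval_X, Polynomial.eval_C] at this
    exact this
  · rw [Ideal.mem_span_singleton, X_dvd_iff, map_sub, map_one, sub_eq_zero] at ha1
    exact ha1


end Aux14

open PowerSeries

theorem conic_through_node_contact {k : Type} [Field k] :
    -- projectively, the conic xz = y² meets N only at the node (0:0:1)
    (∀ x y z : k, (x ≠ 0 ∨ y ≠ 0 ∨ z ≠ 0) → x * y * z = x ^ 3 + y ^ 3 → x * z = y ^ 2 →
      x = 0 ∧ y = 0 ∧ z ≠ 0) ∧
    -- the two branches of N at the node, and the contact orders (5,1) of the conic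
    ∃ u : PowerSeries k,
      u * PowerSeries.X = u ^ 3 + PowerSeries.X ^ 3 ∧
      u.order = 2 ∧
      -- contact order of (x = y²) with the branch (x,y) = (u(t), t)
      (u - PowerSeries.X ^ 2).order = 5 ∧
      -- contact order of (x = y²) with the branch (x,y) = (t, u(t))
      (PowerSeries.X - u ^ 2).order = 1 := by
  constructor
  · intro x y z hne h1 h2
    have hx3 : x ^ 3 = 0 := by
      linear_combination (-1 : k) * h1 + y * h2
    have hx : x = 0 := by
      exact pow_eq_zero_iff (n := 3) (by norm_num) |>.mp hx3
    have hy : y = 0 := by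
      have : y ^ 2 = 0 := by rw [← h2, hx, zero_mul]
      exact pow_eq_zero_iff (n := 2) (by norm_num) |>.mp this
    refine ⟨hx, hy, ?_⟩
    rcases hne with h | h | h
    · exact absurd hx h
    · exact absurd hy h
    · exact h
  · obtain ⟨b, hb, hb1⟩ := exists_root_b (k := k)
    have hbne : constantCoeff b ≠ 0 := by rw [hb1]; exact one_ne_zero
    set v : k⟦X⟧ := b⁻¹ with hv
    have hbv : b * v = 1 := PowerSeries.mul_inv_cancel b hbne
    have hveq : v = 1 + X ^ 3 * v ^ 3 := by
      have h3 : (b * v) ^ 3 = 1 := by rw [hbv]; ring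
      have h2 : (b * v) ^ 2 * v = v := by rw [hbv]; ring
      linear_combination (norm := ring_nf) (-(v^3)) * hb + h3 - h2
    have hvc : constantCoeff v = 1 := by
      rw [hv, PowerSeries.constantCoeff_inv, hb1, inv_one]
    have hv0 : v.order = 0 :=
      order_zero_of_unit (isUnit_iff_constantCoeff.mpr (by rw [hvc]; exact isUnit_one))
    refine ⟨X ^ 2 * v, ?_, ?_, ?_, ?_⟩
    · linear_combination (X ^ 3 : k⟦X⟧) * hveq
    · rw [order_mul, order_X_pow, hv0]; rfl
    · have : X ^ 2 * v - X ^ 2 = X ^ 5 * v ^ 3 := by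
        have : v - 1 = X ^ 3 * v ^ 3 := by linear_combination hveq
        calc X ^ 2 * v - X ^ 2 = X ^ 2 * (v - 1) := by ring
        _ = X ^ 2 * (X ^ 3 * v ^ 3) := by rw [this]
        _ = X ^ 5 * v ^ 3 := by ring
      rw [this, order_mul, order_X_pow, pow_three, order_mul, order_mul, hv0]; rfl
    · have : X - (X ^ 2 * v) ^ 2 = X * (1 - X ^ 3 * v ^ 2) := by ring
      rw [this, order_mul, order_X]
      have hc : constantCoeff (1 - X ^ 3 * v ^ 2) = 1 := by
        simp [map_sub, map_mul, map_pow, PowerSeries.constantCoeff_X]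
      have : (1 - X ^ 3 * v ^ 2 : k⟦X⟧).order = 0 :=
        order_zero_of_unit (isUnit_iff_constantCoeff.mpr (by rw [hc]; exact isUnit_one))
      rw [this]; rfl
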